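/- Let f₁ be a hyperbolic analytic circle diffeomorphism with rot f₁ = 0, and let f₂ ≠ id be an analytic circle diffeomorphism. Then there exists an analytic circle diffeomorphism h such that (h∘f₁∘h⁻¹) ∘ f₂⁻¹ has a periodic point of period 2, and rot((h∘f₁∘h⁻¹) ∘ f₂⁻¹) = 1/2. -/

import Mathlib

open Filter Topology

/-- An analytic circle diffeomorphism, given by an analytic, strictly increasing lift
`F : ℝ → ℝ` with `F (x+1) = F x + 1`, together with an analytic inverse. -/
structure AnalyticCircleDiffeo where
  toFun : ℝ → ℝ
  invFun : ℝ → ℝ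
  analyticAt_toFun : ∀ x, AnalyticAt ℝ toFun x
  analyticAt_invFun : ∀ x, AnalyticAt ℝ invFun x
  strictMono_toFun : StrictMono toFun
  leftInverse : Function.LeftInverse invFun toFun
  rightInverse : Function.RightInverse invFun toFun
  map_add_one : ∀ x, toFun (x + 1) = toFun x + 1

namespace AnalyticCircleDiffeo

/-- The rotation number of (the chosen lift of) a circle diffeomorphism. -/
noncomputable def rot (f : AnalyticCircleDiffeo) : ℝ :=
  limUnder atTop fun n : ℕ => f.toFun^[n] 0 / n

/-- The composition of two analytic circle diffeomorphisms. -/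
def comp (f g : AnalyticCircleDiffeo) : AnalyticCircleDiffeo where
  toFun := f.toFun ∘ g.toFun
  invFun := g.invFun ∘ f.invFun
  analyticAt_toFun := fun x => (f.analyticAt_toFun _).comp (g.analyticAt_toFun x)
  analyticAt_invFun := fun x => (g.analyticAt_invFun _).comp (f.analyticAt_invFun x)
  strictMono_toFun := f.strictMono_toFun.comp g.strictMono_toFun
  leftInverse := fun x => by
    show g.invFun (f.invFun (f.toFun (g.toFun x))) = x
    rw [f.leftInverse (g.toFun x), g.leftInverse x]
  rightInverse := fun x => by
    show f.toFun (g.toFun (g.invFun (f.invFun x))) = x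
    rw [g.rightInverse (f.invFun x), f.rightInverse x]
  map_add_one := fun x => by
    show f.toFun (g.toFun (x + 1)) = f.toFun (g.toFun x) + 1
    rw [g.map_add_one, f.map_add_one]

/-- The inverse of an analytic circle diffeomorphism. -/
def symm (f : AnalyticCircleDiffeo) : AnalyticCircleDiffeo where
  toFun := f.invFun
  invFun := f.toFun
  analyticAt_toFun := f.analyticAt_invFun
  analyticAt_invFun := f.analyticAt_toFun
  strictMono_toFun := fun x y hxy => by
    have h := f.strictMono_toFun.lt_iff_lt (a := f.invFun x) (b := f.invFun y)
    rw [f.rightInverse x, f.rightInverse y] at h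
    exact h.mp hxy
  leftInverse := f.rightInverse
  rightInverse := f.leftInverse
  map_add_one := fun x => by
    apply f.strictMono_toFun.injective
    rw [f.rightInverse, f.map_add_one, f.rightInverse]

/-- The circle diffeomorphism `f + ω : x ↦ f x + ω`. -/
noncomputable def addConst (f : AnalyticCircleDiffeo) (ω : ℝ) : AnalyticCircleDiffeo where
  toFun := fun x => f.toFun x + ω
  invFun := fun x => f.invFun (x - ω)
  analyticAt_toFun := fun x => (f.analyticAt_toFun x).add analyticAt_const
  analyticAt_invFun := fun x => by
    have h1 : AnalyticAt ℝ (fun y : ℝ => y - ω) x := analyticAt_id.sub analyticAt_const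
    have h2 : AnalyticAt ℝ (f.invFun ∘ fun y : ℝ => y - ω) x :=
      AnalyticAt.comp (g := f.invFun) (f := fun y : ℝ => y - ω)
        (f.analyticAt_invFun (x - ω)) h1
    exact h2
  strictMono_toFun := fun x y hxy => by
    show f.toFun x + ω < f.toFun y + ω
    linarith [f.strictMono_toFun hxy]
  leftInverse := fun x => by
    show f.invFun (f.toFun x + ω - ω) = x
    rw [add_sub_cancel_right, f.leftInverse x]
  rightInverse := fun x => by
    show f.toFun (f.invFun (x - ω)) + ω = x
    rw [f.rightInverse (x - ω)]; ring
  map_add_one := fun x => by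
    show f.toFun (x + 1) + ω = f.toFun x + ω + 1
    rw [f.map_add_one]; ring

/-- Two circle diffeomorphisms are analytically conjugate: `f₂ = h ∘ f₁ ∘ h⁻¹` as maps
of `ℝ/ℤ`; in terms of lifts, `h ∘ f₁ = f₂ ∘ h + k` for some integer `k`. -/
def Conjugate (f₁ f₂ : AnalyticCircleDiffeo) : Prop :=
  ∃ h : AnalyticCircleDiffeo, ∃ k : ℤ,
    ∀ x, h.toFun (f₁.toFun x) = f₂.toFun (h.toFun x) + k

/-- `f` is the identity of `ℝ/ℤ`, i.e. its lift is an integer translation. -/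
def IsId (f : AnalyticCircleDiffeo) : Prop :=
  ∃ k : ℤ, ∀ x, f.toFun x = x + k

/-- A circle diffeomorphism (with rotation number `0 mod 1`) is hyperbolic if it has a
fixed point on `ℝ/ℤ` and the multiplier at every fixed point is `≠ 1`. -/
def Hyperbolic (f : AnalyticCircleDiffeo) : Prop :=
  (∃ x : ℝ, ∃ k : ℤ, f.toFun x = x + k) ∧
    ∀ x : ℝ, (∃ k : ℤ, f.toFun x = x + k) → deriv f.toFun x ≠ 1

end AnalyticCircleDiffeo

/-- A real number is Diophantine. -/
def Diophantine (ρ : ℝ) : Prop :=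
  ∃ C > (0:ℝ), ∃ β > (0:ℝ), ∀ p : ℤ, ∀ q : ℕ, 0 < q →
    |ρ - p / q| ≥ C / (q : ℝ) ^ ((2:ℝ) + β)


section Aux

open Filter Topology

namespace AnalyticCircleDiffeo

/-- The `CircleDeg1Lift` associated to an analytic circle diffeomorphism. -/
def lift (f : AnalyticCircleDiffeo) : CircleDeg1Lift :=
  ⟨⟨f.toFun, f.strictMono_toFun.monotone⟩, f.map_add_one⟩

@[simp] lemma lift_apply (f : AnalyticCircleDiffeo) (x : ℝ) : f.lift x = f.toFun x := rfl

lemma continuous_toFun (f : AnalyticCircleDiffeo) : Continuous f.toFun :=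
  continuous_iff_continuousAt.mpr fun x => (f.analyticAt_toFun x).continuousAt

lemma continuous_lift (f : AnalyticCircleDiffeo) : Continuous f.lift := f.continuous_toFun

lemma rot_eq_translationNumber (f : AnalyticCircleDiffeo) :
    rot f = CircleDeg1Lift.translationNumber f.lift := by
  have h := f.lift.tendsto_translation_number₀
  have h2 : Tendsto (fun n : ℕ => f.toFun^[n] 0 / n) atTop
      (𝓝 (CircleDeg1Lift.translationNumber f.lift)) := by
    refine h.congr fun n => ?_
    rw [CircleDeg1Lift.coe_pow]
    rfl
  exact h2.limUnder_eq

/-- Build an analytic circle diffeomorphism from an analytic lift with positive derivative. -/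
noncomputable def ofAnalytic (h : ℝ → ℝ) (han : ∀ x, AnalyticAt ℝ h x)
    (hd : ∀ x, 0 < deriv h x) (hper : ∀ x, h (x + 1) = h x + 1) : AnalyticCircleDiffeo := by
  have hsm : StrictMono h := strictMono_of_deriv_pos hd
  have hc : Continuous h := continuous_iff_continuousAt.mpr fun x => (han x).continuousAt
  have hsurj : Function.Surjective h := by
    let cl : CircleDeg1Lift := ⟨⟨h, hsm.monotone⟩, hper⟩
    have : Continuous cl := hc
    exact cl.continuous_iff_surjective.mp this
  exact
  { toFun := h
    invFun := ⇑(StrictMono.orderIsoOfSurjective h hsm hsurj).symm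
    analyticAt_toFun := han
    analyticAt_invFun := by
      intro y
      set e := StrictMono.orderIsoOfSurjective h hsm hsurj with he
      set ph := (e.toHomeomorph).toOpenPartialHomeomorph with hph
      have hcoe : ⇑ph = h := rfl
      set x := e.symm y with hx
      have hdiff : DifferentiableAt ℝ h x := (han x).differentiableAt
      set c := deriv h x with hc
      have hc0 : c ≠ 0 := ne_of_gt (hd x)
      set i : ℝ ≃L[ℝ] ℝ := ContinuousLinearEquiv.unitsEquivAut ℝ (Units.mk0 c hc0) with hi
      have hfderiv : fderiv ℝ h x = (i : ℝ →L[ℝ] ℝ) := by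
        have h1 : HasFDerivAt h (ContinuousLinearMap.smulRight (1 : ℝ →L[ℝ] ℝ) c) x :=
          hdiff.hasDerivAt.hasFDerivAt
        rw [h1.fderiv]
        refine ContinuousLinearMap.ext_ring ?_
        simp [hi, ContinuousLinearEquiv.unitsEquivAut_apply]
      have h0 : y ∈ ph.target := by simp [hph]
      have hsymm : ph.symm y = x := rfl
      exact ph.analyticAt_symm h0 (by rw [hcoe, hsymm]; exact han x)
        (by rw [hcoe, hsymm]; exact hfderiv)
    strictMono_toFun := hsm
    leftInverse := fun x => (StrictMono.orderIsoOfSurjective h hsm hsurj).symm_apply_apply x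
    rightInverse := fun y => (StrictMono.orderIsoOfSurjective h hsm hsurj).apply_symm_apply y
    map_add_one := hper }

@[simp] lemma ofAnalytic_toFun (h : ℝ → ℝ) (han : ∀ x, AnalyticAt ℝ h x)
    (hd : ∀ x, 0 < deriv h x) (hper : ∀ x, h (x + 1) = h x + 1) :
    (ofAnalytic h han hd hper).toFun = h := rfl

lemma invFun_add_one (f : AnalyticCircleDiffeo) (x : ℝ) :
    f.invFun (x + 1) = f.invFun x + 1 := by
  apply f.strictMono_toFun.injective
  rw [f.rightInverse, f.map_add_one, f.rightInverse]

end AnalyticCircleDiffeo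

end Aux
section Squash

open Filter Topology Real

lemma analyticAt_rsin (x : ℝ) : AnalyticAt ℝ Real.sin x := by
  have h1 : AnalyticAt ℂ Complex.sin (x : ℂ) := by
    have : AnalyticAt ℂ
        (fun z : ℂ => ((Complex.exp (-z * Complex.I) - Complex.exp (z * Complex.I)) * Complex.I) / 2)
        (x : ℂ) := by
      apply AnalyticAt.div
      · exact ((analyticAt_cexp.comp ((analyticAt_id.neg).mul analyticAt_const)).sub
          (analyticAt_cexp.comp (analyticAt_id.mul analyticAt_const))).mul analyticAt_const
      · exact analyticAt_const
      · norm_num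
    exact this.congr (by filter_upwards with z using rfl)
  have h2 : AnalyticAt ℝ (fun x : ℝ => Complex.sin (x : ℂ)) x :=
    (h1.restrictScalars).comp (Complex.ofRealCLM.analyticAt x)
  have h3 : AnalyticAt ℝ (fun x : ℝ => (Complex.sin (x : ℂ)).re) x :=
    (Complex.reCLM.analyticAt _).comp h2
  exact h3.congr (by filter_upwards with y using Complex.sin_ofReal_re y)

/-- The basic squashing map. -/
noncomputable def sqz (x : ℝ) : ℝ := x + Real.sin (2 * π * x) / (4 * π)

/-- Derivative of `sqz`. -/
noncomputable def dsqz (x : ℝ) : ℝ := 1 + Real.cos (2 * π * x) / 2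

lemma sqz_analytic (x : ℝ) : AnalyticAt ℝ sqz x := by
  unfold sqz
  exact analyticAt_id.add (((analyticAt_rsin _).comp
    (analyticAt_const.mul analyticAt_id)).div analyticAt_const (by positivity))

lemma sqz_hasDerivAt (x : ℝ) : HasDerivAt sqz (dsqz x) x := by
  have h1 : HasDerivAt (fun x : ℝ => 2 * π * x) (2 * π) x := by
    simpa using (hasDerivAt_id x).const_mul (2 * π)
  have h2 : HasDerivAt (fun x : ℝ => Real.sin (2 * π * x)) (Real.cos (2 * π * x) * (2 * π)) x :=
    (Real.hasDerivAt_sin _).comp x h1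
  have h3 : HasDerivAt sqz (1 + Real.cos (2 * π * x) * (2 * π) / (4 * π)) x :=
    (hasDerivAt_id x).add (h2.div_const _)
  convert h3 using 1
  have hπ : π ≠ 0 := Real.pi_ne_zero
  unfold dsqz
  field_simp
  ring

lemma dsqz_bounds (x : ℝ) : 1 / 2 ≤ dsqz x ∧ dsqz x ≤ 3 / 2 := by
  have h1 := Real.neg_one_le_cos (2 * π * x)
  have h2 := Real.cos_le_one (2 * π * x)
  constructor <;> (unfold dsqz; linarith)

lemma sqz_deriv_pos (x : ℝ) : 0 < deriv sqz x := by
  rw [(sqz_hasDerivAt x).deriv]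
  linarith [(dsqz_bounds x).1]

lemma sqz_continuous : Continuous sqz :=
  continuous_iff_continuousAt.mpr fun x => (sqz_analytic x).continuousAt

lemma sqz_strictMono : StrictMono sqz := strictMono_of_deriv_pos sqz_deriv_pos

lemma sqz_per (x : ℝ) : sqz (x + 1) = sqz x + 1 := by
  unfold sqz
  have h : 2 * π * (x + 1) = 2 * π * x + 2 * π := by ring
  rw [h, Real.sin_add_two_pi]
  ring

lemma sqz_zero : sqz 0 = 0 := by
  unfold sqz
  norm_num

lemma sqz_half : sqz (1 / 2) = 1 / 2 := by
  unfold sqz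
  have h : 2 * π * (1 / 2) = π := by ring
  rw [h, Real.sin_pi]
  norm_num

lemma sqz_gt {x : ℝ} (h0 : 0 < x) (h1 : x < 1 / 2) : x < sqz x := by
  have hs : 0 < Real.sin (2 * π * x) := by
    apply Real.sin_pos_of_pos_of_lt_pi
    · positivity
    · nlinarith [Real.pi_pos]
  have : 0 < Real.sin (2 * π * x) / (4 * π) := by positivity
  unfold sqz; linarith

lemma sqz_mem {x : ℝ} (h0 : 0 < x) (h1 : x < 1 / 2) : 0 < sqz x ∧ sqz x < 1 / 2 := by
  constructor
  · linarith [sqz_gt h0 h1]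
  · calc sqz x < sqz (1 / 2) := sqz_strictMono h1
      _ = 1 / 2 := sqz_half

lemma sqz_odd (x : ℝ) : sqz (-x) = -sqz x := by
  unfold sqz
  have h : 2 * π * (-x) = -(2 * π * x) := by ring
  rw [h, Real.sin_neg]
  ring

/- iterates -/

lemma sqzN_analytic (N : ℕ) (x : ℝ) : AnalyticAt ℝ (sqz^[N]) x := by
  induction N generalizing x with
  | zero => simpa using analyticAt_id
  | succ n ih =>
    rw [Function.iterate_succ']
    exact (sqz_analytic _).comp (ih x)

lemma sqzN_hasDerivAt (N : ℕ) : ∃ d : ℝ → ℝ,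
    (∀ x, HasDerivAt (sqz^[N]) (d x) x) ∧ (∀ x, (1 / 2 : ℝ) ^ N ≤ d x) := by
  induction N with
  | zero =>
    exact ⟨fun _ => 1, fun x => by simpa using hasDerivAt_id x, fun x => by norm_num⟩
  | succ n ih =>
    obtain ⟨d, hd, hdl⟩ := ih
    refine ⟨fun x => dsqz (sqz^[n] x) * d x, fun x => ?_, fun x => ?_⟩
    · rw [Function.iterate_succ']
      exact (sqz_hasDerivAt _).comp x (hd x)
    · have h1 := (dsqz_bounds (sqz^[n] x)).1
      have h2 := hdl x
      have h3 : (0:ℝ) < (1/2:ℝ)^n := by positivity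
      calc ((1:ℝ)/2)^(n+1) = (1/2) * (1/2)^n := by ring
        _ ≤ dsqz (sqz^[n] x) * d x := by nlinarith

lemma sqzN_per (N : ℕ) (x : ℝ) : sqz^[N] (x + 1) = sqz^[N] x + 1 := by
  induction N generalizing x with
  | zero => simp
  | succ n ih => rw [Function.iterate_succ_apply, sqz_per, ih, Function.iterate_succ_apply]

lemma sqzN_strictMono (N : ℕ) : StrictMono (sqz^[N]) := sqz_strictMono.iterate N

/-- `sqz^[N]` commutes with integer translations. -/
lemma sqzN_add_int (N : ℕ) (x : ℝ) (m : ℤ) : sqz^[N] (x + m) = sqz^[N] x + m := by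
  let cl : CircleDeg1Lift := ⟨⟨sqz^[N], (sqzN_strictMono N).monotone⟩, sqzN_per N⟩
  exact cl.map_add_int x m

lemma sqzN_zero (N : ℕ) : sqz^[N] 0 = 0 := Function.iterate_fixed sqz_zero N

lemma sqzN_odd (N : ℕ) (x : ℝ) : sqz^[N] (-x) = -sqz^[N] x := by
  induction N generalizing x with
  | zero => simp
  | succ n ih => rw [Function.iterate_succ_apply, sqz_odd, ih, Function.iterate_succ_apply]

lemma sqzN_mem (N : ℕ) {x : ℝ} (h0 : 0 < x) (h1 : x < 1 / 2) :
    0 < sqz^[N] x ∧ sqz^[N] x < 1 / 2 := by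
  induction N with
  | zero => exact ⟨h0, h1⟩
  | succ n ih =>
    rw [Function.iterate_succ_apply']
    exact sqz_mem ih.1 ih.2

/-- The iterates of `sqz` eventually exceed any `κ < 1/2` on `(0, 1/2)`. -/
lemma sqzN_large {b κ : ℝ} (hb0 : 0 < b) (hb1 : b < 1 / 2) (hκ : κ < 1 / 2) :
    ∃ N : ℕ, ∀ n ≥ N, κ < sqz^[n] b := by
  set u : ℕ → ℝ := fun n => sqz^[n] b with hu
  have humem : ∀ n, 0 < u n ∧ u n < 1 / 2 := fun n => sqzN_mem n hb0 hb1
  have humono : Monotone u := by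
    apply monotone_nat_of_le_succ
    intro n
    have := sqz_gt (humem n).1 (humem n).2
    simpa [hu, Function.iterate_succ_apply'] using this.le
  have hbdd : BddAbove (Set.range u) := ⟨1 / 2, by rintro y ⟨n, rfl⟩; exact (humem n).2.le⟩
  set L : ℝ := ⨆ n, u n with hL
  have htend : Tendsto u atTop (𝓝 L) := tendsto_atTop_ciSup humono hbdd
  have hfix : sqz L = L := by
    have h1 : Tendsto (fun n => u (n + 1)) atTop (𝓝 L) :=
      htend.comp (tendsto_add_atTop_nat 1)
    have h2 : Tendsto (fun n => sqz (u n)) atTop (𝓝 (sqz L)) :=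
      (sqz_continuous.tendsto L).comp htend
    have h3 : (fun n => u (n + 1)) = fun n => sqz (u n) := by
      funext n
      simp [hu, Function.iterate_succ_apply']
    rw [h3] at h1
    exact tendsto_nhds_unique h2 h1
  have hLpos : 0 < L := lt_of_lt_of_le (humem 0).1 (le_ciSup hbdd 0)
  have hLle : L ≤ 1 / 2 := ciSup_le fun n => (humem n).2.le
  have hLeq : L = 1 / 2 := by
    by_contra hne
    have hlt : L < 1 / 2 := lt_of_le_of_ne hLle hne
    exact absurd hfix (ne_of_gt (sqz_gt hLpos hlt))
  have : ∀ᶠ n in atTop, κ < u n := htend.eventually (eventually_gt_nhds (hLeq ▸ hκ))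
  obtain ⟨N, hN⟩ := eventually_atTop.mp this
  exact ⟨N, hN⟩

end Squash
section Path

open Filter Topology CircleDeg1Lift

/-- clamp to `[0,1]` -/
noncomputable def σc (t : ℝ) : ℝ := max 0 (min 1 t)

lemma σc_mem (t : ℝ) : 0 ≤ σc t ∧ σc t ≤ 1 := by
  refine ⟨le_max_left _ _, ?_⟩
  unfold σc
  rcases le_total 1 t with h | h
  · simp [min_eq_left h]
  · simp only [min_eq_right h]
    rcases le_total 0 t with h0 | h0
    · simp [max_eq_right h0, h]
    · simp [max_eq_left h0]

lemma σc_zero : σc 0 = 0 := by unfold σc; norm_num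

lemma σc_one : σc 1 = 1 := by unfold σc; norm_num

lemma σc_lip (t s : ℝ) : |σc t - σc s| ≤ |t - s| := by
  unfold σc
  rw [max_comm (0:ℝ) (min 1 t), max_comm (0:ℝ) (min 1 s)]
  calc |max (min 1 t) 0 - max (min 1 s) 0| ≤ |min 1 t - min 1 s| :=
      abs_max_sub_max_le_abs _ _ _
    _ ≤ max |(1:ℝ) - 1| |t - s| := abs_min_sub_min_le_max _ _ _ _
    _ ≤ |t - s| := by simp

lemma σc_continuous : Continuous σc :=
  continuous_const.max (continuous_const.min continuous_id)

open AnalyticCircleDiffeo in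
theorem key_lemma (f₁ f₂ : AnalyticCircleDiffeo)
    (h0 h1 d0 d1 : ℝ → ℝ) (m : ℝ) (hm : 0 < m)
    (han0 : ∀ x, AnalyticAt ℝ h0 x) (han1 : ∀ x, AnalyticAt ℝ h1 x)
    (hd0 : ∀ x, HasDerivAt h0 (d0 x) x) (hd1 : ∀ x, HasDerivAt h1 (d1 x) x)
    (hm0 : ∀ x, m ≤ d0 x) (hm1 : ∀ x, m ≤ d1 x)
    (hper0 : ∀ x, h0 (x + 1) = h0 x + 1) (hper1 : ∀ x, h1 (x + 1) = h1 x + 1)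
    (M : ℤ) (xh u₀ u₁ : ℝ)
    (hu0 : h0 u₀ = f₂.invFun xh) (hu1 : h1 u₁ = f₂.invFun xh)
    (hend0 : h0 (f₁.toFun u₀) ≤ xh + (M : ℝ))
    (hend1 : xh + ((M + 1 : ℤ) : ℝ) ≤ h1 (f₁.toFun u₁)) :
    ∃ h : AnalyticCircleDiffeo,
      (∃ x : ℝ,
        (¬ ∃ k : ℤ, (((h.comp f₁).comp h.symm).comp f₂.symm).toFun x = x + (k : ℝ)) ∧
        (∃ k : ℤ, (((h.comp f₁).comp h.symm).comp f₂.symm).toFun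
            ((((h.comp f₁).comp h.symm).comp f₂.symm).toFun x) = x + (k : ℝ))) ∧
      (∃ k : ℤ, rot (((h.comp f₁).comp h.symm).comp f₂.symm) = 1 / 2 + (k : ℝ)) := by
  -- the path of diffeomorphisms
  set H : ℝ → ℝ → ℝ := fun t x => (1 - σc t) * h0 x + σc t * h1 x with hH
  have hanH : ∀ t x, AnalyticAt ℝ (H t) x := fun t x =>
    (analyticAt_const.mul (han0 x)).add (analyticAt_const.mul (han1 x))
  have hdH : ∀ t x, HasDerivAt (H t) ((1 - σc t) * d0 x + σc t * d1 x) x := fun t x =>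
    ((hd0 x).const_mul _).add ((hd1 x).const_mul _)
  have hdHm : ∀ t x, m ≤ (1 - σc t) * d0 x + σc t * d1 x := by
    intro t x
    obtain ⟨hσ0, hσ1⟩ := σc_mem t
    nlinarith [hm0 x, hm1 x]
  have hderivpos : ∀ t x, 0 < deriv (H t) x := by
    intro t x
    rw [(hdH t x).deriv]
    linarith [hdHm t x]
  have hperH : ∀ t x, H t (x + 1) = H t x + 1 := by
    intro t x
    simp only [hH, hper0, hper1]
    ring
  set acd : ℝ → AnalyticCircleDiffeo :=
    fun t => ofAnalytic (H t) (hanH t) (hderivpos t) (hperH t) with hacd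
  set G : ℝ → AnalyticCircleDiffeo :=
    fun t => (((acd t).comp f₁).comp (acd t).symm).comp f₂.symm with hG
  set L : ℝ → CircleDeg1Lift := fun t => (G t).lift with hL
  set ivF : ℝ → ℝ → ℝ := fun t => (acd t).invFun with hivF
  have hLfun : ∀ t x, (L t) x = H t (f₁.toFun (ivF t (f₂.invFun x))) := fun _ _ => rfl
  have hivF_right : ∀ t y, H t (ivF t y) = y := fun t y => (acd t).rightInverse y
  have hivF_left : ∀ t x, ivF t (H t x) = x := fun t x => (acd t).leftInverse x
  -- expansion lower bound
  have hHm : ∀ t a b, m * |a - b| ≤ |H t a - H t b| := by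
    intro t a b
    have hmono : ∀ x y, x ≤ y → m * (y - x) ≤ H t y - H t x := by
      intro x y hxy
      have hg : ∀ z, HasDerivAt (fun w => H t w - m * w)
          ((1 - σc t) * d0 z + σc t * d1 z - m * 1) z := fun z =>
        (hdH t z).sub ((hasDerivAt_id z).const_mul m)
      have hmon : Monotone fun w => H t w - m * w := by
        apply monotone_of_deriv_nonneg
        · intro z
          exact (hg z).differentiableAt
        · intro z
          rw [(hg z).deriv]
          have := hdHm t z
          linarith
      have := hmon hxy
      simp only at this
      linarith
    rcases le_total a b with h | h
    · have h1' := hmono a b h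
      have h2' : 0 ≤ m * (b - a) := mul_nonneg hm.le (by linarith)
      rw [abs_of_nonpos (by linarith : a - b ≤ 0),
        abs_of_nonpos (by linarith : H t a - H t b ≤ 0)]
      have e : m * -(a - b) = m * (b - a) := by ring
      rw [e]
      linarith
    · have h1' := hmono b a h
      have h2' : 0 ≤ m * (a - b) := mul_nonneg hm.le (by linarith)
      rw [abs_of_nonneg (by linarith : 0 ≤ a - b),
        abs_of_nonneg (by linarith : 0 ≤ H t a - H t b)]
      linarith
  -- continuity of the endpoint data
  have hdiff0 : Differentiable ℝ h0 := fun x => (hd0 x).differentiableAt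
  have hdiff1 : Differentiable ℝ h1 := fun x => (hd1 x).differentiableAt
  have hc0 : Continuous h0 := hdiff0.continuous
  have hc1 : Continuous h1 := hdiff1.continuous
  have hsm0 : StrictMono h0 := strictMono_of_deriv_pos
    (fun x => by rw [(hd0 x).deriv]; linarith [hm0 x])
  have hsm1 : StrictMono h1 := strictMono_of_deriv_pos
    (fun x => by rw [(hd1 x).deriv]; linarith [hm1 x])
  -- uniform bound on h1 - h0
  obtain ⟨B, hBnn, hB⟩ : ∃ B, 0 ≤ B ∧ ∀ x, |h1 x - h0 x| ≤ B := by
    have hcont : ContinuousOn (fun x => |h1 x - h0 x|) (Set.Icc (0:ℝ) 1) :=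
      ((hc1.sub hc0).abs).continuousOn
    obtain ⟨xm, hxmem, hxm⟩ :=
      isCompact_Icc.exists_isMaxOn (⟨0, by norm_num⟩ : (Set.Icc (0:ℝ) 1).Nonempty) hcont
    refine ⟨|h1 xm - h0 xm|, abs_nonneg _, fun x => ?_⟩
    set cl0 : CircleDeg1Lift := ⟨⟨h0, hsm0.monotone⟩, hper0⟩ with hcl0
    set cl1 : CircleDeg1Lift := ⟨⟨h1, hsm1.monotone⟩, hper1⟩ with hcl1
    have e0 : h0 (Int.fract x) - Int.fract x = h0 x - x := cl0.map_fract_sub_fract_eq x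
    have e1 : h1 (Int.fract x) - Int.fract x = h1 x - x := cl1.map_fract_sub_fract_eq x
    have heq : h1 x - h0 x = h1 (Int.fract x) - h0 (Int.fract x) := by linarith
    rw [heq]
    exact isMaxOn_iff.mp hxm _ ⟨Int.fract_nonneg x, (Int.fract_lt_one x).le⟩
  -- the inverse is jointly Lipschitz
  have hivF_est : ∀ t s y z, |ivF t y - ivF s z| ≤ (|t - s| * B + |y - z|) / m := by
    intro t s y z
    have e1 : m * |ivF t y - ivF s z| ≤ |H s (ivF t y) - H s (ivF s z)| := hHm s _ _
    have e2 : H s (ivF s z) = z := hivF_right s z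
    have e5 : ∀ x, |H s x - H t x| ≤ |t - s| * B := by
      intro x
      have e : H s x - H t x = (σc s - σc t) * (h1 x - h0 x) := by
        simp only [hH]; ring
      rw [e, abs_mul]
      have := σc_lip s t
      rw [abs_sub_comm s t] at this
      exact mul_le_mul this (hB x) (abs_nonneg _) (abs_nonneg _)
    have e3 : |H s (ivF t y) - z| ≤ |t - s| * B + |y - z| := by
      have h4 := abs_sub_le (H s (ivF t y)) y z
      have h5 : |H s (ivF t y) - y| = |H s (ivF t y) - H t (ivF t y)| := by
        rw [hivF_right t y]
      have := e5 (ivF t y)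
      rw [← h5] at this
      linarith
    rw [le_div_iff₀ hm]
    calc |ivF t y - ivF s z| * m = m * |ivF t y - ivF s z| := by ring
      _ ≤ |H s (ivF t y) - H s (ivF s z)| := e1
      _ = |H s (ivF t y) - z| := by rw [e2]
      _ ≤ |t - s| * B + |y - z| := e3
  -- joint continuity of the inverse
  have hivF_cont : Continuous fun q : ℝ × ℝ => ivF q.1 q.2 := by
    rw [Metric.continuous_iff]
    rintro ⟨t, y⟩ ε hε
    refine ⟨m * ε / (B + 1) / 2, by positivity, ?_⟩
    rintro ⟨s, z⟩ hdist
    rw [Prod.dist_eq] at hdist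
    have hds : dist s t < m * ε / (B + 1) / 2 :=
      lt_of_le_of_lt (le_max_left _ _) hdist
    have hdz : dist z y < m * ε / (B + 1) / 2 :=
      lt_of_le_of_lt (le_max_right _ _) hdist
    rw [Real.dist_eq] at hds hdz
    rw [Real.dist_eq]
    have hest := hivF_est s t z y
    have hkey : |s - t| * B + |z - y| < ε * m := by
      have h1' : |s - t| * B ≤ (m * ε / (B + 1) / 2) * B :=
        mul_le_mul_of_nonneg_right hds.le hBnn
      have h2' : (m * ε / (B + 1) / 2) * (B + 1) = m * ε / 2 := by
        field_simp
      nlinarith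
    calc |ivF s z - ivF t y| ≤ (|s - t| * B + |z - y|) / m := hest
      _ < ε := by rw [div_lt_iff₀ hm]; linarith
  -- joint continuity of the family
  have hψc : Continuous f₂.invFun := f₂.symm.continuous_toFun
  have hHc : Continuous fun q : ℝ × ℝ => H q.1 q.2 := by
    apply Continuous.add
    · exact (continuous_const.sub (σc_continuous.comp continuous_fst)).mul
        (hc0.comp continuous_snd)
    · exact (σc_continuous.comp continuous_fst).mul (hc1.comp continuous_snd)
  have hGc : Continuous fun q : ℝ × ℝ => (L q.1) q.2 := by
    have c1 : Continuous fun q : ℝ × ℝ => (q.1, f₂.invFun q.2) :=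
      continuous_fst.prodMk (hψc.comp continuous_snd)
    have c2 : Continuous fun q : ℝ × ℝ => ivF q.1 (f₂.invFun q.2) := hivF_cont.comp c1
    have c3 : Continuous fun q : ℝ × ℝ => (q.1, f₁.toFun (ivF q.1 (f₂.invFun q.2))) :=
      continuous_fst.prodMk (f₁.continuous_toFun.comp c2)
    exact hHc.comp c3
  have hLc : ∀ t, Continuous (L t) := by
    intro t
    have e : (⇑(L t)) = fun x => (fun q : ℝ × ℝ => (L q.1) q.2) (t, x) := rfl
    rw [e]
    exact hGc.comp (continuous_const.prodMk continuous_id)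
  have hiter_cont : ∀ (n : ℕ) (x₀ : ℝ), Continuous fun t => (⇑(L t))^[n] x₀ := by
    intro n x₀
    set Φ : ℝ × ℝ → ℝ × ℝ := fun q => (q.1, (L q.1) q.2) with hΦ
    have hΦc : Continuous Φ := continuous_fst.prodMk hGc
    have hiter : ∀ (k : ℕ) (t x : ℝ), Φ^[k] (t, x) = (t, (⇑(L t))^[k] x) := by
      intro k
      induction k with
      | zero => intro t x; simp
      | succ k ih =>
        intro t x
        rw [Function.iterate_succ_apply, Function.iterate_succ_apply]
        have e : Φ (t, x) = (t, (L t) x) := rfl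
        rw [e, ih]
    have e : (fun t => (⇑(L t))^[n] x₀) = fun t => (Φ^[n] (t, x₀)).2 := by
      funext t; rw [hiter n t x₀]
    rw [e]
    exact continuous_snd.comp ((hΦc.iterate n).comp (continuous_id.prodMk continuous_const))
  -- the translation number is continuous along the path
  set φ : ℝ → ℝ := fun t => translationNumber (L t) with hφ
  have hφcont : Continuous φ := by
    rw [continuous_iff_continuousAt]
    intro t₀
    have : Tendsto φ (𝓝 t₀) (𝓝 (φ t₀)) := by
      rw [Metric.tendsto_nhds]
      intro ε hε
      have hub : ∀ᶠ t in 𝓝 t₀, φ t < φ t₀ + ε := by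
        obtain ⟨r, hr1, hr2⟩ := exists_rat_btwn (show φ t₀ < φ t₀ + ε by linarith)
        have hq : (0:ℝ) < (r.den : ℝ) := by exact_mod_cast r.pos
        rw [Rat.cast_def] at hr1 hr2
        obtain ⟨x₁, hx₁⟩ : ∃ x, (⇑(L t₀))^[r.den] x < x + (r.num : ℝ) := by
          by_contra hcon
          push_neg at hcon
          have h0' : (0:ℝ) + ((r.num : ℤ) : ℝ) ≤ (L t₀ ^ r.den) 0 := by
            simpa [CircleDeg1Lift.coe_pow] using hcon 0
          have hle := (L t₀ ^ r.den).le_translationNumber_of_add_int_le h0'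
          rw [translationNumber_pow] at hle
          have : (r.num : ℝ) / (r.den : ℝ) ≤ φ t₀ := by
            rw [div_le_iff₀ hq]
            have hmc := mul_comm (φ t₀) ((r.den:ℕ) : ℝ)
            push_cast at hle ⊢
            linarith
          linarith
        have hx₁' : ∀ᶠ t in 𝓝 t₀, (⇑(L t))^[r.den] x₁ < x₁ + (r.num : ℝ) :=
          ((hiter_cont r.den x₁).tendsto t₀).eventually_lt_const hx₁
        filter_upwards [hx₁'] with t ht
        have h1' : (L t ^ r.den) x₁ ≤ x₁ + ((r.num : ℤ) : ℝ) := by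
          simpa [CircleDeg1Lift.coe_pow] using ht.le
        have hle := (L t ^ r.den).translationNumber_le_of_le_add_int h1'
        rw [translationNumber_pow] at hle
        have : φ t ≤ (r.num : ℝ) / (r.den : ℝ) := by
          rw [le_div_iff₀ hq]
          have hmc := mul_comm (φ t) ((r.den:ℕ) : ℝ)
          push_cast at hle ⊢
          linarith
        linarith
      have hlb : ∀ᶠ t in 𝓝 t₀, φ t₀ - ε < φ t := by
        obtain ⟨r, hr1, hr2⟩ := exists_rat_btwn (show φ t₀ - ε < φ t₀ by linarith)
        have hq : (0:ℝ) < (r.den : ℝ) := by exact_mod_cast r.pos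
        rw [Rat.cast_def] at hr1 hr2
        obtain ⟨x₁, hx₁⟩ : ∃ x, x + (r.num : ℝ) < (⇑(L t₀))^[r.den] x := by
          by_contra hcon
          push_neg at hcon
          have h0' : (L t₀ ^ r.den) 0 ≤ (0:ℝ) + ((r.num : ℤ) : ℝ) := by
            simpa [CircleDeg1Lift.coe_pow] using hcon 0
          have hle := (L t₀ ^ r.den).translationNumber_le_of_le_add_int h0'
          rw [translationNumber_pow] at hle
          have : φ t₀ ≤ (r.num : ℝ) / (r.den : ℝ) := by
            rw [le_div_iff₀ hq]
            have hmc := mul_comm (φ t₀) ((r.den:ℕ) : ℝ)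
            push_cast at hle ⊢
            linarith
          linarith
        have hx₁' : ∀ᶠ t in 𝓝 t₀, x₁ + (r.num : ℝ) < (⇑(L t))^[r.den] x₁ :=
          ((hiter_cont r.den x₁).tendsto t₀).eventually_const_lt hx₁
        filter_upwards [hx₁'] with t ht
        have h1' : x₁ + ((r.num : ℤ) : ℝ) ≤ (L t ^ r.den) x₁ := by
          simpa [CircleDeg1Lift.coe_pow] using ht.le
        have hle := (L t ^ r.den).le_translationNumber_of_add_int_le h1'
        rw [translationNumber_pow] at hle
        have : (r.num : ℝ) / (r.den : ℝ) ≤ φ t := by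
          rw [div_le_iff₀ hq]
          have hmc := mul_comm (φ t) ((r.den:ℕ) : ℝ)
          push_cast at hle ⊢
          linarith
        linarith
      filter_upwards [hub, hlb] with t h₁ h₂
      rw [Real.dist_eq, abs_sub_lt_iff]
      constructor <;> linarith
    exact this
  -- endpoint estimates
  have hH0 : ∀ x, H 0 x = h0 x := by
    intro x; simp only [hH, σc_zero]; ring
  have hH1 : ∀ x, H 1 x = h1 x := by
    intro x; simp only [hH, σc_one]; ring
  have hφ0 : φ 0 ≤ (M : ℝ) := by
    have hinv0 : ivF 0 (f₂.invFun xh) = u₀ := by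
      rw [← hu0, ← hH0 u₀]
      exact hivF_left 0 u₀
    have hpt : (L 0) xh ≤ xh + ((M : ℤ) : ℝ) := by
      have e1 : (L 0) xh = H 0 (f₁.toFun (ivF 0 (f₂.invFun xh))) := hLfun 0 xh
      rw [e1, hinv0, hH0]
      exact_mod_cast hend0
    exact_mod_cast (L 0).translationNumber_le_of_le_add_int hpt
  have hφ1 : (M : ℝ) + 1 ≤ φ 1 := by
    have hinv1 : ivF 1 (f₂.invFun xh) = u₁ := by
      rw [← hu1, ← hH1 u₁]
      exact hivF_left 1 u₁
    have hpt : xh + ((M + 1 : ℤ) : ℝ) ≤ (L 1) xh := by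
      have e1 : (L 1) xh = H 1 (f₁.toFun (ivF 1 (f₂.invFun xh))) := hLfun 1 xh
      rw [e1, hinv1, hH1]
      exact hend1
    have := (L 1).le_translationNumber_of_add_int_le hpt
    push_cast at this
    linarith
  -- intermediate value theorem
  have hmem : ((M : ℝ) + 1/2) ∈ Set.Icc (φ 0) (φ 1) := ⟨by linarith, by linarith⟩
  obtain ⟨ts, hts_mem, hts⟩ := intermediate_value_Icc zero_le_one hφcont.continuousOn hmem
  refine ⟨acd ts, ?_, ⟨M, ?_⟩⟩
  · -- the periodic orbit
    have hτ : translationNumber (L ts) = ((2*M+1 : ℤ) : ℝ) / ((2:ℕ) : ℝ) := by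
      have e : translationNumber (L ts) = φ ts := rfl
      rw [e, hts]
      push_cast
      ring
    obtain ⟨x, hx⟩ :=
      (translationNumber_eq_rat_iff (f := L ts) (hLc ts) (by norm_num : 0 < 2)).mp hτ
    have hx2 : (L ts) ((L ts) x) = x + ((2*M+1 : ℤ) : ℝ) := by
      rw [← hx, pow_two, CircleDeg1Lift.mul_apply]
    refine ⟨x, ?_, ⟨2*M+1, ?_⟩⟩
    · rintro ⟨k, hk⟩
      have hk' : (L ts) x = x + (k : ℝ) := hk
      have hkk : (L ts) ((L ts) x) = x + (k : ℝ) + (k : ℝ) := by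
        rw [hk']
        have e := (L ts).map_add_int x k
        rw [e, hk']
      rw [hx2] at hkk
      have hek : ((2*k : ℤ) : ℝ) = ((2*M+1 : ℤ) : ℝ) := by
        push_cast at hkk ⊢
        linarith
      have := Int.cast_injective hek
      omega
    · exact_mod_cast hx2
  · -- the rotation number
    have e : (((acd ts).comp f₁).comp (acd ts).symm).comp f₂.symm = G ts := rfl
    rw [e, (G ts).rot_eq_translationNumber]
    have e2 : translationNumber (L ts) = φ ts := rfl
    rw [show (G ts).lift = L ts from rfl, e2, hts]
    push_cast
    ring

end Path
section Final

open Filter Topology CircleDeg1Lift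

open AnalyticCircleDiffeo in
theorem statement5_aux (f₁ f₂ : AnalyticCircleDiffeo)
    (h₁hyp : Hyperbolic f₁) (h₂ : ¬ IsId f₂) :
    ∃ h : AnalyticCircleDiffeo,
      (∃ x : ℝ,
        (¬ ∃ k : ℤ, (((h.comp f₁).comp h.symm).comp f₂.symm).toFun x = x + (k : ℝ)) ∧
        (∃ k : ℤ, (((h.comp f₁).comp h.symm).comp f₂.symm).toFun
            ((((h.comp f₁).comp h.symm).comp f₂.symm).toFun x) = x + (k : ℝ))) ∧
      (∃ k : ℤ, rot (((h.comp f₁).comp h.symm).comp f₂.symm) = 1 / 2 + (k : ℝ)) := by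
  obtain ⟨⟨p, k₀, hp⟩, hdv⟩ := h₁hyp
  set F : ℝ → ℝ := f₁.toFun with hF
  set D : ℝ → ℝ := fun x => F x - x - k₀ with hD
  have hDp : D p = 0 := by simp [hD, hp]
  have hDdiff : ∀ x, HasDerivAt D (deriv F x - 1) x := by
    intro x
    have h1 : HasDerivAt F (deriv F x) x :=
      (f₁.analyticAt_toFun x).differentiableAt.hasDerivAt
    have h2 : HasDerivAt (fun y : ℝ => y + (k₀ : ℝ)) 1 x := (hasDerivAt_id x).add_const _
    have hfun : D = fun y => F y - (y + (k₀ : ℝ)) := by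
      funext y; simp only [hD]; ring
    rw [hfun]
    exact h1.sub h2
  have hderiv_ne : deriv F p - 1 ≠ 0 := by
    intro hcon
    exact hdv p ⟨k₀, hp⟩ (by linarith : deriv F p = 1)
  have hDneg : ∃ z, D z < 0 := by
    by_contra hno
    push_neg at hno
    have hmin : IsLocalMin D p := Filter.Eventually.of_forall fun x => by
      rw [hDp]; exact hno x
    have h0 := hmin.deriv_eq_zero
    rw [(hDdiff p).deriv] at h0
    exact hderiv_ne h0
  have hDpos : ∃ z, 0 < D z := by
    by_contra hno
    push_neg at hno
    have hmax : IsLocalMax D p := Filter.Eventually.of_forall fun x => by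
      rw [hDp]; exact hno x
    have h0 := hmax.deriv_eq_zero
    rw [(hDdiff p).deriv] at h0
    exact hderiv_ne h0
  have hDint : ∀ (z : ℝ) (n : ℤ), D (z - n) = D z := by
    intro z n
    have he : F (z - n) = F z - n := f₁.lift.map_sub_int z n
    simp only [hD, he]
    ring
  have hmono : StrictMono F := f₁.strictMono_toFun
  have hnormalize : ∀ z, D z ≠ 0 → ∃ w, p < w ∧ w < p + 1 ∧ D w = D z := by
    intro z hz
    set n : ℤ := ⌊z - p⌋ with hn
    refine ⟨z - n, ?_, ?_, hDint z n⟩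
    · have h1 : p ≤ z - n := by
        have := Int.floor_le (z - p)
        linarith
      rcases h1.lt_or_eq with h | h
      · exact h
      · exfalso
        apply hz
        rw [← hDint z n, ← h]
        exact hDp
    · have := Int.lt_floor_add_one (z - p)
      linarith
  obtain ⟨z₁, hz₁⟩ := hDpos
  obtain ⟨z₀, hz₀⟩ := hDneg
  obtain ⟨xp, hxp1, hxp2, hxp3⟩ := hnormalize z₁ (ne_of_gt hz₁)
  obtain ⟨xm, hxm1, hxm2, hxm3⟩ := hnormalize z₀ (ne_of_lt hz₀)
  set δ : ℝ := D xp with hδ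
  set δ' : ℝ := -D xm with hδ'
  have hδpos : 0 < δ := hxp3 ▸ hz₁
  have hδ'pos : 0 < δ' := by
    have : D xm < 0 := hxm3 ▸ hz₀
    simp only [hδ']
    linarith
  have hδlt : δ < 1 := by
    have h1 : F xp < F (p + 1) := hmono (by linarith)
    have h2 : F (p + 1) = F p + 1 := f₁.map_add_one p
    have h3 : F xp < p + k₀ + 1 := by rw [hp] at h2; linarith
    simp only [hδ, hD]
    linarith
  have hδ'lt : δ' < 1 := by
    have h1 : F p < F xm := hmono hxm1
    rw [hp] at h1
    simp only [hδ', hD]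
    linarith
  clear_value δ δ'
  -- a point where f₂ displaces by a non-integer
  obtain ⟨ys, hys⟩ : ∃ y, ∀ k : ℤ, f₂.toFun y - y ≠ k := by
    by_contra hno
    push_neg at hno
    set g : ℝ → ℝ := fun y => f₂.toFun y - y with hg
    have hgc : Continuous g := f₂.continuous_toFun.sub continuous_id
    obtain ⟨k0, hk0⟩ := hno 0
    have hmain : ∀ (a b : ℝ) (ka kb : ℤ), g a = ka → g b = kb → ka < kb → False := by
      intro a b ka kb hga hgb hlt
      have hmem : ((ka : ℝ) + 1/2) ∈ Set.uIcc (g a) (g b) := by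
        rw [hga, hgb, Set.mem_uIcc]
        left
        have : (ka : ℝ) + 1 ≤ (kb : ℝ) := by exact_mod_cast hlt
        constructor <;> linarith
      obtain ⟨z, _, hz⟩ := intermediate_value_uIcc hgc.continuousOn hmem
      obtain ⟨kz, hkz⟩ := hno z
      have hkz' : g z = (kz : ℝ) := hkz
      rw [hkz'] at hz
      have h2 : (2*kz : ℤ) = 2*ka + 1 := by
        have : ((2*kz : ℤ) : ℝ) = ((2*ka+1 : ℤ) : ℝ) := by push_cast; linarith
        exact_mod_cast this
      omega
    have hall : ∀ x, g x = k0 := by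
      intro x
      obtain ⟨kx, hkx⟩ := hno x
      have hkx' : g x = (kx : ℝ) := hkx
      rw [hkx']
      by_contra hne
      have hnei : kx ≠ k0 := fun hcon => hne (by rw [hcon])
      rcases hnei.lt_or_gt with h | h
      · exact hmain x 0 kx k0 hkx hk0 h
      · exact hmain 0 x k0 kx hk0 hkx h
    exact h₂ ⟨k0, fun x => by have := hall x; simp only [hg] at this; linarith⟩
  set c : ℝ := f₂.toFun ys - ys with hc
  set fl : ℤ := ⌊c⌋ with hfl
  have hfr0 : 0 < c - fl := by
    have h1 := Int.floor_le c
    rw [← hfl] at h1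
    rcases h1.lt_or_eq with h | h
    · linarith
    · exact absurd h.symm (hys fl)
  have hfr1 : c - fl < 1 := by
    have h1 := Int.lt_floor_add_one c
    rw [← hfl] at h1
    linarith
  clear_value c fl
  -- choose the amount of squashing
  have hb0 : 0 < δ/2 := by linarith
  have hb1 : δ/2 < 1/2 := by linarith
  have hk1 : (c - fl)/2 < 1/2 := by linarith
  have hb0' : 0 < δ'/2 := by linarith
  have hb1' : δ'/2 < 1/2 := by linarith
  have hk2 : (1 - (c - fl))/2 < 1/2 := by linarith
  obtain ⟨N₁, hN₁⟩ := sqzN_large hb0 hb1 hk1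
  obtain ⟨N₂, hN₂⟩ := sqzN_large hb0' hb1' hk2
  set N : ℕ := max N₁ N₂ with hN
  have hNa : (c - fl)/2 < sqz^[N] (δ/2) := hN₁ N (le_max_left _ _)
  have hNb : (1 - (c - fl))/2 < sqz^[N] (δ'/2) := hN₂ N (le_max_right _ _)
  obtain ⟨dN, hdN, hdNl⟩ := sqzN_hasDerivAt N
  set c1 : ℝ := xp + δ/2 with hc1
  set c0 : ℝ := xm - δ'/2 with hc0
  set e1 : ℝ := ys - sqz^[N] (-(δ/2)) with he1
  set e0 : ℝ := ys - sqz^[N] (δ'/2) with he0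
  set h1f : ℝ → ℝ := fun x => sqz^[N] (x - c1) + e1 with hh1f
  set h0f : ℝ → ℝ := fun x => sqz^[N] (x - c0) + e0 with hh0f
  set d1f : ℝ → ℝ := fun x => dN (x - c1) with hd1f
  set d0f : ℝ → ℝ := fun x => dN (x - c0) with hd0f
  have han1 : ∀ x, AnalyticAt ℝ h1f x := fun x =>
    ((sqzN_analytic N _).comp (analyticAt_id.sub analyticAt_const)).add analyticAt_const
  have han0 : ∀ x, AnalyticAt ℝ h0f x := fun x =>
    ((sqzN_analytic N _).comp (analyticAt_id.sub analyticAt_const)).add analyticAt_const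
  have hder1 : ∀ x, HasDerivAt h1f (d1f x) x := by
    intro x
    have hcomp := (hdN (x - c1)).comp x ((hasDerivAt_id x).sub_const c1)
    simpa [Function.comp, hd1f, hh1f] using hcomp.add_const e1
  have hder0 : ∀ x, HasDerivAt h0f (d0f x) x := by
    intro x
    have hcomp := (hdN (x - c0)).comp x ((hasDerivAt_id x).sub_const c0)
    simpa [Function.comp, hd0f, hh0f] using hcomp.add_const e0
  have hmpos : (0:ℝ) < (1/2:ℝ)^N := by positivity
  have hm1 : ∀ x, (1/2:ℝ)^N ≤ d1f x := fun x => hdNl _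
  have hm0 : ∀ x, (1/2:ℝ)^N ≤ d0f x := fun x => hdNl _
  have hper1 : ∀ x, h1f (x + 1) = h1f x + 1 := by
    intro x
    simp only [hh1f]
    have e : x + 1 - c1 = (x - c1) + 1 := by ring
    rw [e, sqzN_per]
    ring
  have hper0 : ∀ x, h0f (x + 1) = h0f x + 1 := by
    intro x
    simp only [hh0f]
    have e : x + 1 - c0 = (x - c0) + 1 := by ring
    rw [e, sqzN_per]
    ring
  set xh : ℝ := f₂.toFun ys with hxh
  have hinvxh : f₂.invFun xh = ys := f₂.leftInverse ys
  have hu1 : h1f xp = f₂.invFun xh := by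
    rw [hinvxh]
    simp only [hh1f]
    have e : xp - c1 = -(δ/2) := by rw [hc1]; ring
    rw [e, he1]
    ring
  have hu0 : h0f xm = f₂.invFun xh := by
    rw [hinvxh]
    simp only [hh0f]
    have e : xm - c0 = δ'/2 := by rw [hc0]; ring
    rw [e, he0]
    ring
  set M : ℤ := k₀ - 1 - fl with hM
  clear_value xh M
  have hodd : sqz^[N] (-(δ/2)) = -sqz^[N] (δ/2) := sqzN_odd N (δ/2)
  have hend1 : xh + ((M + 1 : ℤ) : ℝ) ≤ h1f (F xp) := by
    have hFxp : F xp = xp + δ + k₀ := by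
      have : δ = F xp - xp - k₀ := by rw [hδ, hD]
      linarith
    have harg : F xp - c1 = δ/2 + (k₀ : ℤ) := by
      rw [hFxp, hc1]; push_cast; ring
    have hval : h1f (F xp) = sqz^[N] (δ/2) + k₀ + e1 := by
      simp only [hh1f]
      rw [harg, sqzN_add_int]
    rw [hval, he1, hodd]
    have hxhc : xh = ys + c := by rw [hc]; ring
    rw [hxhc, hM]
    push_cast
    have h2s : c - fl < 2 * sqz^[N] (δ/2) := by linarith
    linarith
  have hend0 : h0f (F xm) ≤ xh + (M : ℝ) := by
    have hFxm : F xm = xm - δ' + k₀ := by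
      have : δ' = -(F xm - xm - k₀) := by rw [hδ', hD]
      linarith
    have harg : F xm - c0 = -(δ'/2) + (k₀ : ℤ) := by
      rw [hFxm, hc0]; push_cast; ring
    have hval : h0f (F xm) = sqz^[N] (-(δ'/2)) + k₀ + e0 := by
      simp only [hh0f]
      rw [harg, sqzN_add_int]
    rw [hval, he0, sqzN_odd]
    have hxhc : xh = ys + c := by rw [hc]; ring
    rw [hxhc, hM]
    push_cast
    have h2s : 1 - (c - fl) < 2 * sqz^[N] (δ'/2) := by linarith
    linarith
  exact key_lemma f₁ f₂ h0f h1f d0f d1f ((1/2:ℝ)^N) hmpos han0 han1 hder0 hder1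
    hm0 hm1 hper0 hper1 M xh xm xp hu0 hu1 hend0 hend1

end Final
open AnalyticCircleDiffeo in
/-- For a hyperbolic analytic circle diffeomorphism `f₁` with
`rot f₁ = 0 (mod 1)` and an analytic circle diffeomorphism `f₂ ≠ id`, there is an
analytic circle diffeomorphism `h` such that `g := (h ∘ f₁ ∘ h⁻¹) ∘ f₂⁻¹` has a periodic
point of period `2` on `ℝ/ℤ` (a point `x` with `g (g x) = x` but `g x ≠ x` mod `1`), and
`rot g = 1/2 (mod 1)`. -/
theorem statement5 (f₁ f₂ : AnalyticCircleDiffeo)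
    (h₁hyp : Hyperbolic f₁) (h₁rot : ∃ k : ℤ, rot f₁ = (k : ℝ))
    (h₂ : ¬ IsId f₂) :
    ∃ h : AnalyticCircleDiffeo,
      (∃ x : ℝ,
        (¬ ∃ k : ℤ, (((h.comp f₁).comp h.symm).comp f₂.symm).toFun x = x + (k : ℝ)) ∧
        (∃ k : ℤ, (((h.comp f₁).comp h.symm).comp f₂.symm).toFun
            ((((h.comp f₁).comp h.symm).comp f₂.symm).toFun x) = x + (k : ℝ))) ∧
      (∃ k : ℤ, rot (((h.comp f₁).comp h.symm).comp f₂.symm) = 1 / 2 + (k : ℝ)) := by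
  exact statement5_aux f₁ f₂ h₁hyp h₂
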